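/- The point K₃ = (0, 0, 1) (the monomorphic defector state) is an equilibrium of F, and charpoly(J(K₃)) = X · (X − ε) · (X + γ); in particular, if ε > 0 then J(K₃) has the positive real eigenvalue ε, so K₃ is linearly unstable. -/

import Mathlib

noncomputable section

open Polynomial

/-- Payoff of altruistic punishers. -/
def PiAP (γ x y z : ℝ) : ℝ := x + y - γ * z

/-- Payoff of non-punishing cooperators. -/
def PiNC (x y : ℝ) : ℝ := x + y

/-- Payoff of defectors. -/
def PiD (b β x y : ℝ) : ℝ := (b - β) * x + b * y

/-- First component of the reduced replicator vector field. -/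
def fRep (b β γ ε x y z : ℝ) : ℝ :=
  x * ((1 - x) * (PiAP γ x y z - ε) - y * (PiNC x y - ε) - z * (PiD b β x y - ε))

/-- Second component of the reduced replicator vector field. -/
def gRep (b β γ ε x y z : ℝ) : ℝ :=
  y * ((1 - y) * (PiNC x y - ε) - x * (PiAP γ x y z - ε) - z * (PiD b β x y - ε))

/-- Third component of the reduced replicator vector field. -/
def hRep (b β γ ε x y z : ℝ) : ℝ :=
  z * ((1 - z) * (PiD b β x y - ε) - y * (PiNC x y - ε) - x * (PiAP γ x y z - ε))

/-- The reduced replicator vector field `F : ℝ³ → ℝ³`. -/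
def Fv (b β γ ε : ℝ) (p : ℝ × ℝ × ℝ) : ℝ × ℝ × ℝ :=
  (fRep b β γ ε p.1 p.2.1 p.2.2,
   gRep b β γ ε p.1 p.2.1 p.2.2,
   hRep b β γ ε p.1 p.2.1 p.2.2)

/-- Partial derivative in the first variable. -/
def pd1 (F : ℝ → ℝ → ℝ → ℝ) (p : ℝ × ℝ × ℝ) : ℝ :=
  deriv (fun x => F x p.2.1 p.2.2) p.1

/-- Partial derivative in the second variable. -/
def pd2 (F : ℝ → ℝ → ℝ → ℝ) (p : ℝ × ℝ × ℝ) : ℝ :=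
  deriv (fun y => F p.1 y p.2.2) p.2.1

/-- Partial derivative in the third variable. -/
def pd3 (F : ℝ → ℝ → ℝ → ℝ) (p : ℝ × ℝ × ℝ) : ℝ :=
  deriv (fun z => F p.1 p.2.1 z) p.2.2

/-- The Jacobian matrix of the reduced replicator vector field at `p`. -/
def Jac (b β γ ε : ℝ) (p : ℝ × ℝ × ℝ) : Matrix (Fin 3) (Fin 3) ℝ :=
  !![pd1 (fRep b β γ ε) p, pd2 (fRep b β γ ε) p, pd3 (fRep b β γ ε) p;
     pd1 (gRep b β γ ε) p, pd2 (gRep b β γ ε) p, pd3 (gRep b β γ ε) p;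
     pd1 (hRep b β γ ε) p, pd2 (hRep b β γ ε) p, pd3 (hRep b β γ ε) p]

lemma deriv_cubic (a b c d t : ℝ) :
    deriv (fun x : ℝ => a*x^3 + b*x^2 + c*x + d) t = 3*a*t^2 + 2*b*t + c := by
  have h := ((((hasDerivAt_pow 3 t).const_mul a).add
      ((hasDerivAt_pow 2 t).const_mul b)).add
      ((hasDerivAt_id t).const_mul c)).add_const d
  simp only [id, Pi.add_apply] at h
  rw [h.deriv]; push_cast; ring

lemma deriv_eq_of (f : ℝ → ℝ) (a b c d t : ℝ)
    (h : ∀ x, f x = a*x^3 + b*x^2 + c*x + d) :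
    deriv f t = 3*a*t^2 + 2*b*t + c := by
  have : f = fun x => a*x^3 + b*x^2 + c*x + d := funext h
  rw [this, deriv_cubic]

/-- the monomorphic defector state `K₃ = (0,0,1)`. -/
theorem K3_equilibrium_charpoly_unstable (b β γ ε : ℝ)
    (hb : 1 < b) (hβ : 0 < β) (hγ : 0 < γ) (hε : ε < 1) :
    Fv b β γ ε (0, 0, 1) = (0, 0, 0) ∧
    (Jac b β γ ε (0, 0, 1)).charpoly =
      X * (X - C ε) * (X + C γ) ∧
    (0 < ε →
      0 < ε ∧ ((Jac b β γ ε (0, 0, 1)).charpoly).IsRoot ε) := by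
  have jac : Jac b β γ ε (0, 0, 1) = !![-γ, 0, 0; 0, 0, 0; γ+ε, ε, ε] := by
    have e11 : pd1 (fRep b β γ ε) (0,0,1) = -γ := by
      have := deriv_eq_of (fun x => fRep b β γ ε x 0 1) (-1) (1+γ+ε-b+β) (-γ) 0 0
        (fun x => by simp [fRep, PiAP, PiNC, PiD]; ring)
      simpa [pd1] using this.trans (by ring)
    have e12 : pd2 (fRep b β γ ε) (0,0,1) = 0 := by
      have := deriv_eq_of (fun y => fRep b β γ ε 0 y 1) 0 0 0 0 0
        (fun y => by simp [fRep, PiAP, PiNC, PiD])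
      simpa [pd2] using this.trans (by ring)
    have e13 : pd3 (fRep b β γ ε) (0,0,1) = 0 := by
      have := deriv_eq_of (fun z => fRep b β γ ε 0 0 z) 0 0 0 0 1
        (fun z => by simp [fRep, PiAP, PiNC, PiD])
      simpa [pd3] using this.trans (by ring)
    have e21 : pd1 (gRep b β γ ε) (0,0,1) = 0 := by
      have := deriv_eq_of (fun x => gRep b β γ ε x 0 1) 0 0 0 0 0
        (fun x => by simp [gRep, PiAP, PiNC, PiD])
      simpa [pd1] using this.trans (by ring)
    have e22 : pd2 (gRep b β γ ε) (0,0,1) = 0 := by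
      have := deriv_eq_of (fun y => gRep b β γ ε 0 y 1) (-1) (1+ε-b) 0 0 0
        (fun y => by simp [gRep, PiAP, PiNC, PiD]; ring)
      simpa [pd2] using this.trans (by ring)
    have e23 : pd3 (gRep b β γ ε) (0,0,1) = 0 := by
      have := deriv_eq_of (fun z => gRep b β γ ε 0 0 z) 0 0 0 0 1
        (fun z => by simp [gRep, PiAP, PiNC, PiD])
      simpa [pd3] using this.trans (by ring)
    have e31 : pd1 (hRep b β γ ε) (0,0,1) = γ + ε := by
      have := deriv_eq_of (fun x => hRep b β γ ε x 0 1) 0 (-1) (γ+ε) 0 0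
        (fun x => by simp [hRep, PiAP, PiNC, PiD]; ring)
      simpa [pd1] using this.trans (by ring)
    have e32 : pd2 (hRep b β γ ε) (0,0,1) = ε := by
      have := deriv_eq_of (fun y => hRep b β γ ε 0 y 1) 0 (-1) ε 0 0
        (fun y => by simp [hRep, PiAP, PiNC, PiD]; ring)
      simpa [pd2] using this.trans (by ring)
    have e33 : pd3 (hRep b β γ ε) (0,0,1) = ε := by
      have := deriv_eq_of (fun z => hRep b β γ ε 0 0 z) 0 ε (-ε) 0 1
        (fun z => by simp [hRep, PiAP, PiNC, PiD]; ring)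
      simpa [pd3] using this.trans (by ring)
    rw [Jac, e11, e12, e13, e21, e22, e23, e31, e32, e33]
  have hcp : (Jac b β γ ε (0, 0, 1)).charpoly = X * (X - C ε) * (X + C γ) := by
    rw [jac, Matrix.charpoly, Matrix.det_fin_three]
    simp [Matrix.charmatrix_apply, Matrix.one_apply]
    ring
  refine ⟨?_, hcp, fun hε0 => ⟨hε0, ?_⟩⟩
  · simp [Fv, fRep, gRep, hRep, PiAP, PiNC, PiD]
  · rw [hcp]
    simp [IsRoot]
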